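/- Let T, S ∈ G both be hyperbolic with S ∘ T = T ∘ S. Then T and S have the same boundary fixed points: {x ∈ H : ‖x‖ = 1 and (x,1) is an eigenvector of T} = {x ∈ H : ‖x‖ = 1 and (x,1) is an eigenvector of S}. -/

import Mathlib

noncomputable section

variable {H : Type*} [NormedAddCommGroup H] [InnerProductSpace ℂ H] [CompleteSpace H]

/-- The Hermitian form `A((x,z),(y,w)) = ⟨x,y⟩ - z·conj w` on `H ⊕ ℂ`, linear in the
first argument (the paper's convention); `⟨x,y⟩` (linear in `x`) is `inner y x` in Mathlib. -/
def formA (u v : H × ℂ) : ℂ :=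
  (inner ℂ v.1 u.1 : ℂ) - u.2 * (starRingEnd ℂ) v.2

/-- The standard inner product of the Hilbert space `H ⊕ ℂ`, linear in the first argument. -/
def ipStd (u v : H × ℂ) : ℂ :=
  (inner ℂ v.1 u.1 : ℂ) + u.2 * (starRingEnd ℂ) v.2

/-- Membership in the group `G` of bounded bijective linear maps preserving `A`. -/
def memG (T : (H × ℂ) →L[ℂ] (H × ℂ)) : Prop :=
  Function.Bijective T ∧ ∀ u v : H × ℂ, formA (T u) (T v) = formA u v

/-- `T` is elliptic: it has an eigenvector `(x,1)` with `‖x‖ < 1`. -/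
def IsEllipticG (T : (H × ℂ) →L[ℂ] (H × ℂ)) : Prop :=
  ∃ x : H, ‖x‖ < 1 ∧ ∃ μ : ℂ, T (x, 1) = μ • ((x, 1) : H × ℂ)

/-- Points `x` of the closed unit ball with `(x,1)` an eigenvector of `T`. -/
def fixedBall (T : (H × ℂ) →L[ℂ] (H × ℂ)) : Set H :=
  {x : H | ‖x‖ ≤ 1 ∧ ∃ μ : ℂ, T (x, 1) = μ • ((x, 1) : H × ℂ)}

/-- `T` is hyperbolic: not elliptic, with exactly two fixed points in the closed ball. -/
def IsHyperbolicG (T : (H × ℂ) →L[ℂ] (H × ℂ)) : Prop :=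
  ¬ IsEllipticG T ∧ ∃ x y : H, x ≠ y ∧ fixedBall T = {x, y}

/-- `T` is parabolic: not elliptic, with exactly one fixed point in the closed ball. -/
def IsParabolicG (T : (H × ℂ) →L[ℂ] (H × ℂ)) : Prop :=
  ¬ IsEllipticG T ∧ ∃ x : H, fixedBall T = {x}

/-- `M†`, the `A`-orthogonal complement of a subspace `M` of `H ⊕ ℂ`. -/
def daggerA (M : Submodule ℂ (H × ℂ)) : Submodule ℂ (H × ℂ) where
  carrier := {v | ∀ m ∈ M, formA v m = 0}
  add_mem' := by
    intro a b ha hb m hm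
    have h1 := ha m hm
    have h2 := hb m hm
    simp only [formA, Prod.fst_add, Prod.snd_add, inner_add_right, add_mul] at *
    linear_combination h1 + h2
  zero_mem' := by
    intro m hm
    simp [formA]
  smul_mem' := by
    intro c a ha m hm
    have h1 := ha m hm
    simp only [formA, Prod.smul_fst, Prod.smul_snd, inner_smul_right, smul_eq_mul] at *
    linear_combination c * h1

/-- The norm induced by `A` on a subspace where `A` is positive. -/
def nA (v : H × ℂ) : ℝ := Real.sqrt (formA v v).re

/-- Sequential completeness of a subspace for the norm induced by `A`. -/
def CompleteForA (M : Submodule ℂ (H × ℂ)) : Prop :=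
  ∀ f : ℕ → H × ℂ, (∀ n, f n ∈ M) →
    (∀ ε : ℝ, 0 < ε → ∃ N : ℕ, ∀ m n : ℕ, N ≤ m → N ≤ n → nA (f m - f n) < ε) →
    ∃ v ∈ M, ∀ ε : ℝ, 0 < ε → ∃ N : ℕ, ∀ n : ℕ, N ≤ n → nA (f n - v) < ε

end

section
variable {H : Type*} [NormedAddCommGroup H] [InnerProductSpace ℂ H] [CompleteSpace H]

set_option linter.unusedSectionVars false

lemma formA_smul_smul (a b : ℂ) (u v : H × ℂ) :
    formA (a • u) (b • v) = a * (starRingEnd ℂ) b * formA u v := by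
  simp only [formA, Prod.smul_fst, Prod.smul_snd, inner_smul_left, inner_smul_right,
    smul_eq_mul, map_mul]
  ring

lemma formA_self_re (x : H) (w : ℂ) :
    (formA ((x, w) : H × ℂ) (x, w)).re = ‖x‖ ^ 2 - Complex.normSq w := by
  simp [formA, inner_self_eq_norm_sq_to_K, Complex.mul_conj, ← Complex.ofReal_pow]

lemma formA_expand (a b : ℂ) (u v : H × ℂ) :
    formA (a • u + b • v) (a • u + b • v)
      = a * (starRingEnd ℂ) a * formA u u + a * (starRingEnd ℂ) b * formA u v
        + b * (starRingEnd ℂ) a * formA v u + b * (starRingEnd ℂ) b * formA v v := by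
  simp only [formA, Prod.fst_add, Prod.snd_add, Prod.smul_fst, Prod.smul_snd,
    inner_add_left, inner_add_right, inner_smul_left, inner_smul_right,
    smul_eq_mul, map_add, map_mul]
  ring

lemma formA_conj_symm (u v : H × ℂ) :
    formA v u = (starRingEnd ℂ) (formA u v) := by
  simp only [formA, map_sub, map_mul, Complex.conj_conj, ← inner_conj_symm u.1 v.1]
  ring

lemma formA_null {y : H} (hy : ‖y‖ = 1) : formA ((y, 1) : H × ℂ) (y, 1) = 0 := by
  simp [formA, inner_self_eq_norm_sq_to_K, hy]

lemma eigen_norm_one {T : (H × ℂ) →L[ℂ] (H × ℂ)} (hne : ¬ IsEllipticG T)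
    {x : H} (hx : x ∈ fixedBall T) : ‖x‖ = 1 := by
  rcases hx with ⟨hle, μ, hμ⟩
  rcases lt_or_eq_of_le hle with h | h
  · exact absurd ⟨x, h, μ, hμ⟩ hne
  · exact h

lemma formA_pq_ne_zero {p q : H} (hp : ‖p‖ = 1) (hq : ‖q‖ = 1) (hpq : p ≠ q) :
    formA ((p, 1) : H × ℂ) (q, 1) ≠ 0 := by
  intro h
  simp only [formA, map_one, mul_one] at h
  have h1 : (inner ℂ q p : ℂ) = 1 := sub_eq_zero.mp h
  have h2 : (inner ℂ p q : ℂ) = 1 := by rw [← inner_conj_symm, h1]; simp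
  have h3 : ‖p - q‖ ^ 2 = 0 := by
    rw [@norm_sub_sq ℂ, h2, hp, hq]; norm_num
  have h4 := pow_eq_zero_iff (n := 2) (by norm_num) |>.mp h3
  rw [norm_eq_zero, sub_eq_zero] at h4
  exact hpq h4

lemma maps_fixed {T S : (H × ℂ) →L[ℂ] (H × ℂ)} (hS : memG S)
    (hcomm : S ∘L T = T ∘L S) {x : H} (hx1 : ‖x‖ = 1) {μ : ℂ}
    (hx : T (x, 1) = μ • ((x, 1) : H × ℂ)) :
    ∃ (y : H) (c : ℂ), c ≠ 0 ∧ ‖y‖ = 1 ∧ S (x, 1) = c • ((y, 1) : H × ℂ)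
      ∧ T (y, 1) = μ • ((y, 1) : H × ℂ) := by
  obtain ⟨w, hw⟩ : ∃ w, S ((x, 1) : H × ℂ) = w := ⟨_, rfl⟩
  have hQ : (formA w w).re = 0 := by
    rw [← hw, hS.2]
    have := formA_self_re x (1 : ℂ)
    simp only [Complex.normSq_one, hx1] at this
    rw [this]; norm_num
  have hQ' : ‖w.1‖ ^ 2 = Complex.normSq w.2 := by
    have := formA_self_re w.1 w.2
    simp only [Prod.mk.eta] at this
    rw [this] at hQ; linarith
  have hc : w.2 ≠ 0 := by
    intro h0
    have h1 : w.1 = 0 := by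
      have : ‖w.1‖ ^ 2 = 0 := by rw [hQ', h0]; simp
      simpa [pow_eq_zero_iff] using this
    have hw0 : w = 0 := Prod.ext h1 h0
    have : ((x, 1) : H × ℂ) = 0 := by
      apply hS.1.1
      rw [hw, hw0, map_zero]
    simpa [Prod.ext_iff] using this
  have h1 : ‖w.1‖ = ‖w.2‖ := by
    have h2 : ‖w.1‖ ^ 2 = ‖w.2‖ ^ 2 := by
      rw [hQ', Complex.sq_norm]
    nlinarith [norm_nonneg w.1, norm_nonneg w.2]
  have hsm : w = w.2 • ((w.2⁻¹ • w.1, 1) : H × ℂ) := by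
    apply Prod.ext
    · simp [smul_smul, mul_inv_cancel₀ hc]
    · simp [hc]
  refine ⟨w.2⁻¹ • w.1, w.2, hc, ?_, hsm ▸ hw, ?_⟩
  · rw [norm_smul, h1, norm_inv]
    exact inv_mul_cancel₀ (by simpa using hc)
  · have hTw : T w = μ • w := by
      have h3 : S (T ((x, 1) : H × ℂ)) = T (S ((x, 1) : H × ℂ)) := by
        have := congrFun (congrArg DFunLike.coe hcomm) ((x, 1) : H × ℂ)
        simpa using this
      rw [hx, map_smul, hw] at h3
      exact h3.symm
    rw [hsm, map_smul] at hTw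
    have h4 : w.2 • T ((w.2⁻¹ • w.1, 1) : H × ℂ)
        = w.2 • (μ • ((w.2⁻¹ • w.1, 1) : H × ℂ)) := by
      rw [hTw, smul_comm]
    exact smul_right_injective _ hc h4

lemma pair_eq' {α : Type*} {a b p q : α} (hp : p ∈ ({a, b} : Set α))
    (hq : q ∈ ({a, b} : Set α)) (hpq : p ≠ q) : ({a, b} : Set α) = {p, q} := by
  simp only [Set.mem_insert_iff, Set.mem_singleton_iff] at hp hq
  rcases hp with rfl | rfl <;> rcases hq with rfl | rfl
  · exact absurd rfl hpq
  · rfl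
  · exact Set.pair_comm _ _
  · exact absurd rfl hpq

lemma coeff_eq {p q : H} (hpq : p ≠ q) {a b a' b' : ℂ}
    (h : a • ((p, 1) : H × ℂ) + b • ((q, 1) : H × ℂ)
        = a' • ((p, 1) : H × ℂ) + b' • ((q, 1) : H × ℂ)) :
    a = a' ∧ b = b' := by
  have h2 : a + b = a' + b' := by
    have := congrArg Prod.snd h
    simpa using this
  have h1 : a • p + b • q = a' • p + b' • q := by
    have := congrArg Prod.fst h
    simpa using this
  have ht : a - a' = b' - b := by linear_combination h2
  have h3 : (a - a') • p = (b' - b) • q := by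
    rw [sub_smul, sub_smul, sub_eq_sub_iff_add_eq_add]
    exact h1.trans (add_comm _ _)
  have h4 : (a - a') • (p - q) = 0 := by
    rw [smul_sub, h3, ht, sub_self]
  rcases smul_eq_zero.mp h4 with h5 | h5
  · constructor
    · exact sub_eq_zero.mp h5
    · have : b' - b = 0 := by rw [← ht, h5]
      exact (sub_eq_zero.mp this).symm
  · exact absurd (sub_eq_zero.mp h5) hpq

lemma elliptic_of_neg {S : (H × ℂ) →L[ℂ] (H × ℂ)} {h : H} {z ε : ℂ}
    (heig : S (h, z) = ε • ((h, z) : H × ℂ))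
    (hneg : (formA ((h, z) : H × ℂ) (h, z)).re < 0) : IsEllipticG S := by
  rw [formA_self_re] at hneg
  have hz : z ≠ 0 := by
    intro h0
    rw [h0] at hneg
    simp at hneg
    nlinarith [sq_nonneg ‖h‖]
  refine ⟨z⁻¹ • h, ?_, ε, ?_⟩
  · rw [norm_smul, norm_inv]
    rw [inv_mul_lt_iff₀ (by simpa using hz), mul_one]
    have h2 : ‖h‖ ^ 2 < ‖z‖ ^ 2 := by
      have : Complex.normSq z = ‖z‖ ^ 2 := by
        rw [Complex.sq_norm]
      linarith
    nlinarith [norm_nonneg h, norm_nonneg z]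
  · have hv : ((z⁻¹ • h, 1) : H × ℂ) = z⁻¹ • ((h, z) : H × ℂ) := by
      apply Prod.ext
      · simp
      · simp [inv_mul_cancel₀ hz]
    rw [hv, map_smul, heig, smul_comm]

lemma fixed_of_null {S : (H × ℂ) →L[ℂ] (H × ℂ)} {h : H} {z ε : ℂ}
    (heig : S (h, z) = ε • ((h, z) : H × ℂ))
    (hnull : (formA ((h, z) : H × ℂ) (h, z)).re = 0) (hz : z ≠ 0) :
    ‖z⁻¹ • h‖ = 1 ∧ S ((z⁻¹ • h, 1) : H × ℂ) = ε • ((z⁻¹ • h, 1) : H × ℂ) := by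
  rw [formA_self_re] at hnull
  constructor
  · rw [norm_smul, norm_inv]
    have h2 : ‖h‖ ^ 2 = ‖z‖ ^ 2 := by
      calc ‖h‖ ^ 2 = Complex.normSq z := by linarith
        _ = ‖z‖ ^ 2 := by rw [Complex.sq_norm]
    have h3 : ‖h‖ = ‖z‖ := by nlinarith [norm_nonneg h, norm_nonneg z]
    rw [h3]
    exact inv_mul_cancel₀ (by simpa using hz)
  · have hv : ((z⁻¹ • h, 1) : H × ℂ) = z⁻¹ • ((h, z) : H × ℂ) := by
      apply Prod.ext
      · simp
      · simp [inv_mul_cancel₀ hz]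
    rw [hv, map_smul, heig, smul_comm]

lemma fixedBall_eq (T S : (H × ℂ) →L[ℂ] (H × ℂ)) (hT : memG T) (hS : memG S)
    (hTh : IsHyperbolicG T) (hSh : IsHyperbolicG S) (hcomm : S ∘L T = T ∘L S) :
    fixedBall T = fixedBall S := by
  obtain ⟨hTne, p, q, hpq, hPQ⟩ := hTh
  obtain ⟨hSne, a, b, hab, hAB⟩ := hSh
  have hpF : p ∈ fixedBall T := by rw [hPQ]; left; rfl
  have hqF : q ∈ fixedBall T := by rw [hPQ]; right; rfl
  have hp1 : ‖p‖ = 1 := eigen_norm_one hTne hpF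
  have hq1 : ‖q‖ = 1 := eigen_norm_one hTne hqF
  obtain ⟨-, μ, hμ⟩ := hpF
  obtain ⟨-, ν, hν⟩ := hqF
  obtain ⟨y, c, hc0, hy1, hSc, hTy⟩ := maps_fixed hS hcomm hp1 hμ
  obtain ⟨y', d, hd0, hy'1, hSd, hTy'⟩ := maps_fixed hS hcomm hq1 hν
  have hyF : y ∈ ({p, q} : Set H) := by rw [← hPQ]; exact ⟨le_of_eq hy1, μ, hTy⟩
  have hy'F : y' ∈ ({p, q} : Set H) := by rw [← hPQ]; exact ⟨le_of_eq hy'1, ν, hTy'⟩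
  have hs0 : formA ((p, 1) : H × ℂ) (q, 1) ≠ 0 := formA_pq_ne_zero hp1 hq1 hpq
  have hyy' : y ≠ y' := by
    rintro rfl
    apply hs0
    have h5 := hS.2 ((p, 1) : H × ℂ) ((q, 1) : H × ℂ)
    rw [hSc, hSd, formA_smul_smul, formA_null hy1] at h5
    rw [← h5]; ring
  simp only [Set.mem_insert_iff, Set.mem_singleton_iff] at hyF hy'F
  rcases hyF with hY | hY
  · -- y = p : identity case
    have hY' : y' = q := by
      rcases hy'F with h2 | h2
      · exact absurd (hY.trans h2.symm) hyy'
      · exact h2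
    rw [hY] at hSc
    rw [hY'] at hSd
    have hpS : p ∈ fixedBall S := ⟨hp1.le, c, hSc⟩
    have hqS : q ∈ fixedBall S := ⟨hq1.le, d, hSd⟩
    rw [hAB] at hpS hqS
    rw [hPQ, hAB, pair_eq' hpS hqS hpq]
  · -- y = q : swap case, derive contradiction
    exfalso
    have hY' : y' = p := by
      rcases hy'F with h2 | h2
      · exact h2
      · exact absurd (hY.trans h2.symm) hyy'
    rw [hY] at hSc
    rw [hY'] at hSd
    -- eigenvalue relation
    have hμν : μ * (starRingEnd ℂ) ν = 1 := by
      have h5 := hT.2 ((p, 1) : H × ℂ) ((q, 1) : H × ℂ)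
      rw [hμ, hν, formA_smul_smul] at h5
      have h6 : (μ * (starRingEnd ℂ) ν - 1) * formA ((p, 1) : H × ℂ) (q, 1) = 0 := by
        linear_combination h5
      rcases mul_eq_zero.mp h6 with h7 | h7
      · exact sub_eq_zero.mp h7
      · exact absurd h7 hs0
    obtain ⟨γ, hγ⟩ := IsAlgClosed.exists_pow_nat_eq (c * d) zero_lt_two
    rw [pow_two] at hγ
    have hγ0 : γ ≠ 0 := by
      rintro rfl
      have h8 : c * d = 0 := by rw [← hγ]; ring
      rcases mul_eq_zero.mp h8 with h | h
      · exact hc0 h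
      · exact hd0 h
    -- eigenvectors of S in the span of u = (p,1), v = (q,1)
    have heig : ∀ ε : ℂ, ε * ε = c * d →
        S (d • ((p, 1) : H × ℂ) + ε • ((q, 1) : H × ℂ))
          = ε • (d • ((p, 1) : H × ℂ) + ε • ((q, 1) : H × ℂ)) := by
      intro ε hε
      rw [map_add, map_smul, map_smul, hSc, hSd]
      rw [smul_smul, smul_smul, smul_add, smul_smul, smul_smul]
      rw [show d * c = ε * ε by rw [hε]; ring, add_comm]
    have hNpair : ∀ ε : ℂ, d • ((p, 1) : H × ℂ) + ε • ((q, 1) : H × ℂ)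
        = ((d • p + ε • q, d + ε) : H × ℂ) := by
      intro ε
      apply Prod.ext <;> simp
    -- values of the form
    have hQval : ∀ ε : ℂ,
        formA (d • ((p, 1) : H × ℂ) + ε • ((q, 1) : H × ℂ))
          (d • ((p, 1) : H × ℂ) + ε • ((q, 1) : H × ℂ))
        = d * (starRingEnd ℂ) ε * formA ((p, 1) : H × ℂ) (q, 1)
          + ε * (starRingEnd ℂ) d * (starRingEnd ℂ) (formA ((p, 1) : H × ℂ) (q, 1)) := by
      intro ε
      rw [formA_expand, formA_null hp1, formA_null hq1,
        formA_conj_symm ((p, 1) : H × ℂ) ((q, 1) : H × ℂ)]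
      ring
    have hQopp : (formA (d • ((p, 1) : H × ℂ) + (-γ) • ((q, 1) : H × ℂ))
          (d • ((p, 1) : H × ℂ) + (-γ) • ((q, 1) : H × ℂ)))
        = - formA (d • ((p, 1) : H × ℂ) + γ • ((q, 1) : H × ℂ))
          (d • ((p, 1) : H × ℂ) + γ • ((q, 1) : H × ℂ)) := by
      rw [hQval, hQval, map_neg]
      ring
    -- trichotomy on the real part
    rcases lt_trichotomy
      (formA (d • ((p, 1) : H × ℂ) + γ • ((q, 1) : H × ℂ))
        (d • ((p, 1) : H × ℂ) + γ • ((q, 1) : H × ℂ))).re 0 with hrn | hr0 | hrp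
    · -- negative : S elliptic
      apply hSne
      have he := heig γ hγ
      rw [hNpair γ] at he hrn
      exact elliptic_of_neg he hrn
    · -- null : the hard case
      -- both ±γ give null eigenvectors
      have hr0' : (formA (d • ((p, 1) : H × ℂ) + (-γ) • ((q, 1) : H × ℂ))
          (d • ((p, 1) : H × ℂ) + (-γ) • ((q, 1) : H × ℂ))).re = 0 := by
        rw [hQopp, Complex.neg_re, hr0, neg_zero]
      -- nonvanishing of second components
      have hz : ∀ ε : ℂ, ε ≠ 0 → (formA (d • ((p, 1) : H × ℂ) + ε • ((q, 1) : H × ℂ))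
          (d • ((p, 1) : H × ℂ) + ε • ((q, 1) : H × ℂ))).re = 0 → d + ε ≠ 0 := by
        intro ε hε0 hεnull h0
        rw [hNpair ε, h0] at hεnull
        rw [formA_self_re] at hεnull
        simp only [Complex.normSq_zero, sub_zero] at hεnull
        have h1 : d • p + ε • q = 0 := by
          have := pow_eq_zero_iff (n := 2) (by norm_num) |>.mp hεnull
          simpa using this
        have h2 : ε = -d := by linear_combination h0
        rw [h2, neg_smul] at h1
        have h3 : d • (p - q) = 0 := by
          rw [smul_sub, sub_eq_add_neg]; exact h1
        rcases smul_eq_zero.mp h3 with h4 | h4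
        · exact hd0 h4
        · exact hpq (sub_eq_zero.mp h4)
      have hzp : d + γ ≠ 0 := hz γ hγ0 hr0
      have hzm : d + (-γ) ≠ 0 := hz (-γ) (neg_ne_zero.mpr hγ0) hr0'
      have heγ := heig γ hγ
      have heγ' := heig (-γ) (by rw [neg_mul_neg]; exact hγ)
      rw [hNpair γ] at heγ hr0
      rw [hNpair (-γ)] at heγ' hr0'
      obtain ⟨hnormp, heigp⟩ := fixed_of_null heγ hr0 hzp
      obtain ⟨hnormm, heigm⟩ := fixed_of_null heγ' hr0' hzm
      have hrep : ∀ ε : ℂ, d + ε ≠ 0 → ((d • p + ε • q, d + ε) : H × ℂ)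
          = (d + ε) • ((((d + ε)⁻¹ • (d • p + ε • q) : H), 1) : H × ℂ) := by
        intro ε hε
        apply Prod.ext
        · show d • p + ε • q = (d + ε) • ((d + ε)⁻¹ • (d • p + ε • q))
          rw [smul_smul, mul_inv_cancel₀ hε, one_smul]
        · show d + ε = (d + ε) • (1 : ℂ)
          rw [smul_eq_mul, mul_one]
      have hepem : (d + γ)⁻¹ • (d • p + γ • q) ≠ (d + (-γ))⁻¹ • (d • p + (-γ) • q) := by
        intro hE
        have hEq : (d + (-γ)) • (d • ((p, 1) : H × ℂ) + γ • ((q, 1) : H × ℂ))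
            = (d + γ) • (d • ((p, 1) : H × ℂ) + (-γ) • ((q, 1) : H × ℂ)) := by
          rw [hNpair γ, hNpair (-γ), hrep γ hzp, hrep (-γ) hzm, hE,
            smul_smul, smul_smul, mul_comm]
        rw [smul_add, smul_add, smul_smul, smul_smul, smul_smul, smul_smul] at hEq
        obtain ⟨hA1, hA2⟩ := coeff_eq hpq hEq
        have h9 : γ * d = 0 := by linear_combination (-(1:ℂ)/2) * hA1
        rcases mul_eq_zero.mp h9 with h | h
        · exact hγ0 h
        · exact hd0 h
      have hepS : (d + γ)⁻¹ • (d • p + γ • q) ∈ fixedBall S := ⟨hnormp.le, γ, heigp⟩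
      have hemS : (d + (-γ))⁻¹ • (d • p + (-γ) • q) ∈ fixedBall S := ⟨hnormm.le, -γ, heigm⟩
      rw [hAB] at hepS hemS
      have hABe := pair_eq' hepS hemS hepem
      obtain ⟨y2, k, hk0, hy21, hTep, hSy2⟩ := maps_fixed hT hcomm.symm hnormp heigp
      have hy2S : y2 ∈ fixedBall S := ⟨hy21.le, γ, hSy2⟩
      rw [hAB, hABe] at hy2S
      simp only [Set.mem_insert_iff, Set.mem_singleton_iff] at hy2S
      have hNg : d • ((p, 1) : H × ℂ) + γ • ((q, 1) : H × ℂ)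
          = (d + γ) • (((d + γ)⁻¹ • (d • p + γ • q), 1) : H × ℂ) := by
        rw [hNpair γ]; exact hrep γ hzp
      rcases hy2S with h10 | h10
      · -- y2 is the eigenvector itself : it would be a fixed point of T
        rw [h10] at hTep
        have hepT : (d + γ)⁻¹ • (d • p + γ • q) ∈ fixedBall T := ⟨hnormp.le, k, hTep⟩
        rw [hPQ] at hepT
        simp only [Set.mem_insert_iff, Set.mem_singleton_iff] at hepT
        rcases hepT with h11 | h11
        · rw [h11] at hNg
          have hNg' : d • ((p, 1) : H × ℂ) + γ • ((q, 1) : H × ℂ)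
              = (d + γ) • ((p, 1) : H × ℂ) + (0 : ℂ) • ((q, 1) : H × ℂ) := by
            rw [zero_smul, add_zero]; exact hNg
          exact hγ0 (coeff_eq hpq hNg').2
        · rw [h11] at hNg
          have hNg' : d • ((p, 1) : H × ℂ) + γ • ((q, 1) : H × ℂ)
              = (0 : ℂ) • ((p, 1) : H × ℂ) + (d + γ) • ((q, 1) : H × ℂ) := by
            rw [zero_smul, zero_add]; exact hNg
          exact hd0 (coeff_eq hpq hNg').1
      · -- T swaps the two eigenvectors of S : forces ν = -μ
        rw [h10] at hTep
        have hNm : d • ((p, 1) : H × ℂ) + (-γ) • ((q, 1) : H × ℂ)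
            = (d + (-γ)) • (((d + (-γ))⁻¹ • (d • p + (-γ) • q), 1) : H × ℂ) := by
          rw [hNpair (-γ)]; exact hrep (-γ) hzm
        have hTN : T (d • ((p, 1) : H × ℂ) + γ • ((q, 1) : H × ℂ))
            = (d * μ) • ((p, 1) : H × ℂ) + (γ * ν) • ((q, 1) : H × ℂ) := by
          rw [map_add, map_smul, map_smul, hμ, hν, smul_smul, smul_smul]
        have hTN2 : T (d • ((p, 1) : H × ℂ) + γ • ((q, 1) : H × ℂ))
            = ((d + γ) * k * (d + (-γ))⁻¹) • (d • ((p, 1) : H × ℂ) + (-γ) • ((q, 1) : H × ℂ)) := by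
          rw [hNg, map_smul, hTep, hNm, smul_smul, smul_smul]
          congr 1
          rw [mul_assoc ((d + γ) * k), inv_mul_cancel₀ hzm, mul_one]
        have hfin := hTN.symm.trans hTN2
        rw [smul_add, smul_smul, smul_smul] at hfin
        obtain ⟨hB1, hB2⟩ := coeff_eq hpq hfin
        have hKμ : μ = (d + γ) * k * (d + (-γ))⁻¹ := by
          have h14 : d * μ = d * ((d + γ) * k * (d + (-γ))⁻¹) := by rw [hB1]; ring
          exact mul_left_cancel₀ hd0 h14
        have hKν : ν = -((d + γ) * k * (d + (-γ))⁻¹) := by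
          have h14 : γ * ν = γ * -((d + γ) * k * (d + (-γ))⁻¹) := by rw [hB2]; ring
          exact mul_left_cancel₀ hγ0 h14
        have hνμ : ν = -μ := by rw [hKν, hKμ]
        rw [hνμ, map_neg] at hμν
        have h12 : -(μ * (starRingEnd ℂ) μ) = 1 := by linear_combination hμν
        rw [Complex.mul_conj] at h12
        have h13 := congrArg Complex.re h12
        simp only [Complex.neg_re, Complex.ofReal_re, Complex.one_re] at h13
        linarith [Complex.normSq_nonneg μ]
    · -- positive : the opposite vector makes S elliptic
      apply hSne
      have he := heig (-γ) (by rw [neg_mul_neg]; exact hγ)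
      have hrn : (formA (d • ((p, 1) : H × ℂ) + (-γ) • ((q, 1) : H × ℂ))
          (d • ((p, 1) : H × ℂ) + (-γ) • ((q, 1) : H × ℂ))).re < 0 := by
        rw [hQopp, Complex.neg_re]
        linarith
      rw [hNpair (-γ)] at he hrn
      exact elliptic_of_neg he hrn

/-- two commuting hyperbolic isometries have the same boundary fixed
points. -/
theorem commuting_hyperbolic_same_fixed_points (T S : (H × ℂ) →L[ℂ] (H × ℂ))
    (hT : memG T) (hS : memG S)
    (hTh : IsHyperbolicG T) (hSh : IsHyperbolicG S)
    (hcomm : S ∘L T = T ∘L S) :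
    {x : H | ‖x‖ = 1 ∧ ∃ μ : ℂ, T (x, 1) = μ • ((x, 1) : H × ℂ)}
      = {x : H | ‖x‖ = 1 ∧ ∃ μ : ℂ, S (x, 1) = μ • ((x, 1) : H × ℂ)} := by
  have hfix := fixedBall_eq T S hT hS hTh hSh hcomm
  ext x
  simp only [Set.mem_setOf_eq]
  constructor
  · rintro ⟨hx1, μ, hμ⟩
    have hxS : x ∈ fixedBall S := hfix ▸ (⟨hx1.le, μ, hμ⟩ : x ∈ fixedBall T)
    exact ⟨eigen_norm_one hSh.1 hxS, hxS.2⟩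
  · rintro ⟨hx1, μ, hμ⟩
    have hxT : x ∈ fixedBall T := hfix.symm ▸ (⟨hx1.le, μ, hμ⟩ : x ∈ fixedBall S)
    exact ⟨eigen_norm_one hTh.1 hxT, hxT.2⟩

end
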